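/- Natural gradient of the KL divergence in its second argument: let q be a fixed positive density on Ω and let t ↦ r(t) be a curve of positive densities on Ω, differentiable at t₀ in each coordinate, with ∑_x r(t)(x) = 1 for all t. Then t ↦ KL(q ‖ r(t)) is differentiable at t₀ with derivative equal to ⟨ −η_{r(t₀)}(q), ṙ ⟩_{r(t₀)} = −∑_x (q(x)/r(t₀)(x) − 1) · ṙ(x) · r(t₀)(x), where ṙ(x) = (d/dt log r(t)(x))|_{t=t₀}. -/

import Mathlib

/-- Natural gradient of the KL divergence in the second argument:
for a fixed positive density `q` and a curve `t ↦ r t` of positive densities with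
score `ṙ` at `t₀`, `(d/dt) KL(q ‖ r t) |_{t₀} = ⟨-η_{r t₀}(q), ṙ⟩_{r t₀}`,
where `η_p(q)(x) = q x / p x - 1`. -/
theorem KL_grad_second {Ω : Type*} [Fintype Ω] [Nonempty Ω]
    (q : Ω → ℝ) (hq : ∀ x, 0 < q x) (hqs : ∑ x, q x = 1)
    (r : ℝ → Ω → ℝ) (rdot : Ω → ℝ) (t₀ : ℝ)
    (hpos : ∀ t x, 0 < r t x) (hsum : ∀ t, ∑ x, r t x = 1)
    (hscore : ∀ x, HasDerivAt (fun t => Real.log (r t x)) (rdot x) t₀) :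
    HasDerivAt (fun t => ∑ x, q x * Real.log (q x / r t x))
      (-∑ x, (q x / r t₀ x - 1) * rdot x * r t₀ x) t₀ := by
  -- derivative of r · x
  have hr : ∀ x, HasDerivAt (fun t => r t x) (rdot x * r t₀ x) t₀ := by
    intro x
    have h := (hscore x).exp
    have he : (fun t => Real.exp (Real.log (r t x))) = fun t => r t x :=
      funext fun t => Real.exp_log (hpos t x)
    rw [he, Real.exp_log (hpos t₀ x), mul_comm] at h
    exact h
  -- sum of rdot x * r t₀ x is 0
  have hzero : ∑ x, rdot x * r t₀ x = 0 := by
    have h1 : HasDerivAt (fun t => ∑ x, r t x) (∑ x, rdot x * r t₀ x) t₀ :=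
      HasDerivAt.fun_sum fun x _ => hr x
    have h2 : HasDerivAt (fun t : ℝ => ∑ x, r t x) 0 t₀ := by
      have : (fun t : ℝ => ∑ x, r t x) = fun _ => (1 : ℝ) := funext fun t => hsum t
      rw [this]; exact hasDerivAt_const _ _
    exact h1.unique h2
  -- derivative of each term
  have hterm : ∀ x : Ω, HasDerivAt (fun t => q x * Real.log (q x / r t x))
      (-(q x * rdot x)) t₀ := by
    intro x
    have he : (fun t => q x * Real.log (q x / r t x))
        = fun t => q x * (Real.log (q x) - Real.log (r t x)) := by
      funext t
      rw [Real.log_div (hq x).ne' (hpos t x).ne']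
    rw [he]
    have h := ((hasDerivAt_const t₀ (Real.log (q x))).sub (hscore x)).const_mul (q x)
    simpa [mul_comm] using h
  have hmain := HasDerivAt.fun_sum (fun x (_ : x ∈ Finset.univ) => hterm x)
  have hx : ∀ x : Ω, (q x / r t₀ x - 1) * rdot x * r t₀ x
      = q x * rdot x - rdot x * r t₀ x := by
    intro x
    rw [sub_mul, sub_mul, one_mul, mul_assoc, mul_comm (rdot x) (r t₀ x), ← mul_assoc,
      div_mul_cancel₀ _ (hpos t₀ x).ne']
  have heq : (-∑ x, (q x / r t₀ x - 1) * rdot x * r t₀ x) = ∑ x, -(q x * rdot x) := by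
    rw [Finset.sum_congr rfl fun x _ => hx x, Finset.sum_sub_distrib, hzero, sub_zero,
      ← Finset.sum_neg_distrib]
  rw [heq]
  exact hmain
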